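/- Let k be a field and let A be a commutative k-algebra admitting two placid presentations A = colim_{α∈I} A_α and A = colim_{β∈J} A′_β. Then for every β ∈ J there exists α₀ ∈ I such that for every α ≥ α₀ the canonical homomorphism A′_β → A factors as the composition of a smooth k-algebra homomorphism A′_β → A_α with the canonical map A_α → A. -/

import Mathlib

lemma sandwichFS {B C D E : Type} [CommRing B] [CommRing C] [CommRing D] [CommRing E]
    (u : B →+* C) (v : C →+* D) (w : D →+* E)
    (h1 : @Algebra.FormallySmooth B D _ _ (v.comp u).toAlgebra)
    (h2 : @Algebra.FormallySmooth C E _ _ (w.comp v).toAlgebra) :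
    @Algebra.FormallySmooth B E _ _ ((w.comp v).comp u).toAlgebra := by
  letI aBD : Algebra B D := (v.comp u).toAlgebra
  letI aCE : Algebra C E := (w.comp v).toAlgebra
  letI aBE : Algebra B E := ((w.comp v).comp u).toAlgebra
  refine Algebra.FormallySmooth.of_comp_surjective fun T _ _ I hI f => ?_
  -- w as a B-algebra hom
  let w' : D →ₐ[B] E := { w with commutes' := fun _ => rfl }
  obtain ⟨ψ, hψ⟩ := by
    haveI := h1; exact Algebra.FormallySmooth.comp_surjective B D I hI (f.comp w')
  letI aCT : Algebra C T := (ψ.toRingHom.comp v).toAlgebra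
  have hq : ∀ c : C, algebraMap C (T ⧸ I) c = Ideal.Quotient.mk I (ψ (v c)) := fun c => rfl
  let f' : E →ₐ[C] T ⧸ I :=
    { f.toRingHom with
      commutes' := fun c => by
        have := DFunLike.congr_fun hψ (v c)
        simp only [AlgHom.comp_apply, Ideal.Quotient.mkₐ_eq_mk] at this
        exact ((hq c).trans this).symm }
  obtain ⟨lam, hlam⟩ := by
    haveI := h2; exact Algebra.FormallySmooth.comp_surjective C E I hI f'
  refine ⟨{ lam.toRingHom with commutes' := fun b => (lam.commutes (u b)).trans (ψ.commutes b) }, ?_⟩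
  ext x
  exact DFunLike.congr_fun hlam x

lemma fpHelper {k : Type} [Field k] {B C : Type} [CommRing B] [CommRing C]
    [Algebra k B] [Algebra k C] (hB : Algebra.FiniteType k B)
    (hC : Algebra.FiniteType k C) (f : B →ₐ[k] C) : f.toRingHom.FinitePresentation := by
  letI : Algebra B C := f.toRingHom.toAlgebra
  haveI : IsScalarTower k B C := IsScalarTower.of_algebraMap_eq fun x => (f.commutes x).symm
  haveI := hB
  haveI := hC
  haveI : IsNoetherianRing B := Algebra.FiniteType.isNoetherianRing k B
  haveI : Algebra.FiniteType B C := Algebra.FiniteType.of_restrictScalars_finiteType k B C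
  exact Algebra.FinitePresentation.of_finiteType.mp this

section Systems

variable {k : Type} [Field k] {A : Type} [CommRing A] [Algebra k A]
    {K : Type} [Preorder K] [IsDirected K (· ≤ ·)] [Nonempty K]
    {C : K → Type} [∀ i, CommRing (C i)] [∀ i, Algebra k (C i)]

lemma eqStab (t : ∀ i j : K, i ≤ j → (C i →ₐ[k] C j)) (ι : ∀ i, C i →ₐ[k] A)
    (ht_comp : ∀ (i j l : K) (hij : i ≤ j) (hjl : j ≤ l),
      (t j l hjl).comp (t i j hij) = t i l (le_trans hij hjl))
    (heq : ∀ (i : K) (x y : C i), ι i x = ι i y →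
      ∃ j, ∃ hij : i ≤ j, t i j hij x = t i j hij y)
    {B : Type} [CommRing B] [Algebra k B] (hB : Algebra.FiniteType k B)
    {κ : K} (u v : B →ₐ[k] C κ) (h : (ι κ).comp u = (ι κ).comp v) :
    ∃ κ', ∃ hκ : κ ≤ κ', (t κ κ' hκ).comp u = (t κ κ' hκ).comp v := by
  classical
  obtain ⟨s, hs⟩ := hB.out
  have H : ∀ x : B, ∃ κ', ∃ hκ : κ ≤ κ', t κ κ' hκ (u x) = t κ κ' hκ (v x) := by
    intro x
    exact heq κ (u x) (v x) (DFunLike.congr_fun h x)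
  choose g hg1 hg2 using H
  obtain ⟨κ', hκ'⟩ := Finset.exists_le (insert κ (s.image g))
  have hκ : κ ≤ κ' := hκ' κ (Finset.mem_insert_self _ _)
  refine ⟨κ', hκ, ?_⟩
  have key : ∀ x ∈ (s : Set B), t κ κ' hκ (u x) = t κ κ' hκ (v x) := by
    intro x hx
    have hmem : g x ≤ κ' :=
      hκ' _ (Finset.mem_insert_of_mem (Finset.mem_image_of_mem g hx))
    have eu := DFunLike.congr_fun (ht_comp κ (g x) κ' (hg1 x) hmem) (u x)
    have ev := DFunLike.congr_fun (ht_comp κ (g x) κ' (hg1 x) hmem) (v x)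
    simp only [AlgHom.comp_apply] at eu ev
    rw [← eu, ← ev, hg2 x]
  have hle : Algebra.adjoin k (s : Set B) ≤
      AlgHom.equalizer ((t κ κ' hκ).comp u) ((t κ κ' hκ).comp v) :=
    Algebra.adjoin_le key
  ext x
  have hx : x ∈ Algebra.adjoin k (s : Set B) := hs ▸ Algebra.mem_top
  exact hle hx

lemma factorLem (t : ∀ i j : K, i ≤ j → (C i →ₐ[k] C j)) (ι : ∀ i, C i →ₐ[k] A)
    (ht_comp : ∀ (i j l : K) (hij : i ≤ j) (hjl : j ≤ l),
      (t j l hjl).comp (t i j hij) = t i l (le_trans hij hjl))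
    (hι : ∀ (i j : K) (hij : i ≤ j), (ι j).comp (t i j hij) = ι i)
    (hsurj : ∀ a : A, ∃ i x, ι i x = a)
    (heq : ∀ (i : K) (x y : C i), ι i x = ι i y →
      ∃ j, ∃ hij : i ≤ j, t i j hij x = t i j hij y)
    {B : Type} [CommRing B] [Algebra k B] (hB : Algebra.FinitePresentation k B)
    (φ : B →ₐ[k] A) : ∃ κ, ∃ g : B →ₐ[k] C κ, (ι κ).comp g = φ := by
  classical
  obtain ⟨n, π, hπs, hker⟩ := hB.out
  have H : ∀ i : Fin n, ∃ κ x, ι κ x = φ (π (MvPolynomial.X i)) := fun i => hsurj _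
  choose κf xf hxf using H
  obtain ⟨κ₀, hκ₀⟩ := Finset.exists_le (Finset.image κf Finset.univ)
  have hκf : ∀ i, κf i ≤ κ₀ := fun i =>
    hκ₀ _ (Finset.mem_image_of_mem κf (Finset.mem_univ i))
  set y : Fin n → C κ₀ := fun i => t (κf i) κ₀ (hκf i) (xf i) with hy_def
  have hy : ∀ i, ι κ₀ (y i) = φ (π (MvPolynomial.X i)) := by
    intro i
    have := DFunLike.congr_fun (hι (κf i) κ₀ (hκf i)) (xf i)
    simp only [AlgHom.comp_apply] at this
    rw [hy_def]; rw [this, hxf]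
  set Φ : MvPolynomial (Fin n) k →ₐ[k] C κ₀ := MvPolynomial.aeval y with hΦ_def
  have hΦ : (ι κ₀).comp Φ = φ.comp π := by
    apply MvPolynomial.algHom_ext
    intro i
    simp [hΦ_def, hy i]
  obtain ⟨s, hs⟩ := hker
  have H2 : ∀ p : {x // x ∈ s}, ∃ κ', ∃ hκ : κ₀ ≤ κ', t κ₀ κ' hκ (Φ p.1) = 0 := by
    intro p
    have hp : (p : MvPolynomial (Fin n) k) ∈ RingHom.ker π.toRingHom := by
      rw [← hs]; exact Ideal.subset_span p.2
    have h0 : ι κ₀ (Φ p.1) = ι κ₀ 0 := by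
      have := DFunLike.congr_fun hΦ p.1
      simp only [AlgHom.comp_apply] at this
      rw [RingHom.mem_ker] at hp
      rw [map_zero, this, show π p.1 = 0 from hp, map_zero]
    obtain ⟨κ', hκ, e⟩ := heq κ₀ (Φ p.1) 0 h0
    exact ⟨κ', hκ, by rwa [map_zero] at e⟩
  choose κg hg1 hg2 using H2
  obtain ⟨κ₁, hκ₁⟩ := Finset.exists_le (insert κ₀ (Finset.image κg Finset.univ))
  have hκ01 : κ₀ ≤ κ₁ := hκ₁ κ₀ (Finset.mem_insert_self _ _)
  set Ψ : MvPolynomial (Fin n) k →ₐ[k] C κ₁ := (t κ₀ κ₁ hκ01).comp Φ with hΨ_def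
  have hΨ0 : ∀ p ∈ RingHom.ker (π : MvPolynomial (Fin n) k →+* B), Ψ p = 0 := by
    intro p hp
    have hp' : p ∈ Ideal.span (s : Set (MvPolynomial (Fin n) k)) := by
      rw [hs]; exact hp
    rw [← SetLike.mem_coe] at hp'
    refine Submodule.span_induction ?_ ?_ ?_ ?_ hp'
    · intro q hq
      have hq' : κg ⟨q, hq⟩ ≤ κ₁ :=
        hκ₁ _ (Finset.mem_insert_of_mem (Finset.mem_image_of_mem κg (Finset.mem_univ _)))
      have e := DFunLike.congr_fun (ht_comp κ₀ (κg ⟨q, hq⟩) κ₁ (hg1 ⟨q, hq⟩) hq') (Φ q)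
      simp only [AlgHom.comp_apply] at e
      rw [hΨ_def]
      simp only [AlgHom.comp_apply]
      rw [← e, hg2 ⟨q, hq⟩, map_zero]
    · exact map_zero Ψ
    · intro a b _ _ ha hb; rw [map_add, ha, hb, add_zero]
    · intro r m _ hm; rw [smul_eq_mul, map_mul, hm, mul_zero]
  set e := Ideal.quotientKerAlgEquivOfSurjective hπs
  set lift := Ideal.Quotient.liftₐ (RingHom.ker (π : MvPolynomial (Fin n) k →+* B)) Ψ hΨ0
  refine ⟨κ₁, lift.comp e.symm.toAlgHom, ?_⟩
  refine AlgHom.ext fun b => ?_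
  obtain ⟨x, rfl⟩ := hπs b
  have he : e.symm (π x) =
      Ideal.Quotient.mk (RingHom.ker (π : MvPolynomial (Fin n) k →+* B)) x := by
    apply e.injective
    rw [AlgEquiv.apply_symm_apply]
    rfl
  have hgx : (lift.comp e.symm.toAlgHom) (π x) = Ψ x := by
    show lift (e.symm (π x)) = Ψ x
    rw [he]
    rfl
  show ι κ₁ ((lift.comp e.symm.toAlgHom) (π x)) = φ (π x)
  rw [hgx]
  have h2 := DFunLike.congr_fun (hι κ₀ κ₁ hκ01) (Φ x)
  simp only [AlgHom.comp_apply] at h2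
  have h3 := DFunLike.congr_fun hΦ x
  simp only [AlgHom.comp_apply] at h3
  show ι κ₁ (t κ₀ κ₁ hκ01 (Φ x)) = φ (π x)
  rw [h2, h3]

end Systems

/-- A homomorphism of commutative rings is smooth if the target is a formally smooth
algebra of finite presentation over the source. -/
def IsSmoothHom {R S : Type} [CommRing R] [CommRing S] (f : R →+* S) : Prop :=
  @Algebra.FormallySmooth R S _ _ f.toAlgebra ∧ f.FinitePresentation

theorem statement9 (k : Type) [Field k]
    (A : Type) [CommRing A] [Algebra k A]
    -- a placid presentation `A = colim_{α ∈ I} A_α`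
    (I : Type) [Preorder I] [IsDirected I (· ≤ ·)] [Nonempty I]
    (A₁ : I → Type) [∀ i, CommRing (A₁ i)] [∀ i, Algebra k (A₁ i)]
    (t₁ : ∀ i j : I, i ≤ j → (A₁ i →ₐ[k] A₁ j)) (ι₁ : ∀ i, A₁ i →ₐ[k] A)
    (ht₁_refl : ∀ i, t₁ i i le_rfl = AlgHom.id k (A₁ i))
    (ht₁_comp : ∀ (i j l : I) (hij : i ≤ j) (hjl : j ≤ l),
      (t₁ j l hjl).comp (t₁ i j hij) = t₁ i l (le_trans hij hjl))
    (hι₁ : ∀ (i j : I) (hij : i ≤ j), (ι₁ j).comp (t₁ i j hij) = ι₁ i)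
    (hft₁ : ∀ i, Algebra.FiniteType k (A₁ i))
    (hsm₁ : ∀ (i j : I) (hij : i ≤ j), IsSmoothHom (t₁ i j hij).toRingHom)
    (hsurj₁ : ∀ a : A, ∃ i x, ι₁ i x = a)
    (heq₁ : ∀ (i : I) (x y : A₁ i), ι₁ i x = ι₁ i y →
      ∃ j, ∃ hij : i ≤ j, t₁ i j hij x = t₁ i j hij y)
    -- a placid presentation `A = colim_{β ∈ J} A′_β`
    (J : Type) [Preorder J] [IsDirected J (· ≤ ·)] [Nonempty J]
    (A₂ : J → Type) [∀ b, CommRing (A₂ b)] [∀ b, Algebra k (A₂ b)]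
    (t₂ : ∀ b c : J, b ≤ c → (A₂ b →ₐ[k] A₂ c)) (ι₂ : ∀ b, A₂ b →ₐ[k] A)
    (ht₂_refl : ∀ b, t₂ b b le_rfl = AlgHom.id k (A₂ b))
    (ht₂_comp : ∀ (b c d : J) (hbc : b ≤ c) (hcd : c ≤ d),
      (t₂ c d hcd).comp (t₂ b c hbc) = t₂ b d (le_trans hbc hcd))
    (hι₂ : ∀ (b c : J) (hbc : b ≤ c), (ι₂ c).comp (t₂ b c hbc) = ι₂ b)
    (hft₂ : ∀ b, Algebra.FiniteType k (A₂ b))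
    (hsm₂ : ∀ (b c : J) (hbc : b ≤ c), IsSmoothHom (t₂ b c hbc).toRingHom)
    (hsurj₂ : ∀ a : A, ∃ b x, ι₂ b x = a)
    (heq₂ : ∀ (b : J) (x y : A₂ b), ι₂ b x = ι₂ b y →
      ∃ c, ∃ hbc : b ≤ c, t₂ b c hbc x = t₂ b c hbc y) :
    ∀ β : J, ∃ α₀ : I, ∀ α : I, α₀ ≤ α →
      ∃ g : A₂ β →ₐ[k] A₁ α, IsSmoothHom g.toRingHom ∧ (ι₁ α).comp g = ι₂ β := by
  intro β
  have hfp₂ : ∀ b, Algebra.FinitePresentation k (A₂ b) := fun b =>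
    Algebra.FinitePresentation.of_finiteType.mp (hft₂ b)
  have hfp₁ : ∀ i, Algebra.FinitePresentation k (A₁ i) := fun i =>
    Algebra.FinitePresentation.of_finiteType.mp (hft₁ i)
  obtain ⟨α₁, g₁, hg₁⟩ := factorLem t₁ ι₁ ht₁_comp hι₁ hsurj₁ heq₁ (hfp₂ β) (ι₂ β)
  obtain ⟨γ₁, h₁, hh₁⟩ := factorLem t₂ ι₂ ht₂_comp hι₂ hsurj₂ heq₂ (hfp₁ α₁) (ι₁ α₁)
  obtain ⟨γ₂, hβγ₂, hγ₁γ₂⟩ := directed_of (· ≤ ·) β γ₁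
  set h₂ := (t₂ γ₁ γ₂ hγ₁γ₂).comp h₁ with hh₂def
  have hh₂ : (ι₂ γ₂).comp h₂ = ι₁ α₁ := by
    rw [hh₂def, ← AlgHom.comp_assoc, hι₂, hh₁]
  have hcomp1 : (ι₂ γ₂).comp (h₂.comp g₁) = (ι₂ γ₂).comp (t₂ β γ₂ hβγ₂) := by
    rw [← AlgHom.comp_assoc, hh₂, hg₁, hι₂]
  obtain ⟨γ₃, hγ₂γ₃, he1⟩ :=
    eqStab t₂ ι₂ ht₂_comp heq₂ (hft₂ β) (h₂.comp g₁) (t₂ β γ₂ hβγ₂) hcomp1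
  set H := (t₂ γ₂ γ₃ hγ₂γ₃).comp h₂ with hHdef
  have hHg : H.comp g₁ = t₂ β γ₃ (le_trans hβγ₂ hγ₂γ₃) := by
    rw [hHdef, AlgHom.comp_assoc, he1, ht₂_comp]
  have hH : (ι₂ γ₃).comp H = ι₁ α₁ := by rw [hHdef, ← AlgHom.comp_assoc, hι₂, hh₂]
  obtain ⟨α₂, g₂, hg₂⟩ := factorLem t₁ ι₁ ht₁_comp hι₁ hsurj₁ heq₁ (hfp₂ γ₃) (ι₂ γ₃)
  obtain ⟨α₃, hα₁α₃, hα₂α₃⟩ := directed_of (· ≤ ·) α₁ α₂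
  set G' := (t₁ α₂ α₃ hα₂α₃).comp g₂ with hG'def
  have hG' : (ι₁ α₃).comp G' = ι₂ γ₃ := by rw [hG'def, ← AlgHom.comp_assoc, hι₁, hg₂]
  have hcomp2 : (ι₁ α₃).comp (G'.comp H) = (ι₁ α₃).comp (t₁ α₁ α₃ hα₁α₃) := by
    rw [← AlgHom.comp_assoc, hG', hH, hι₁]
  obtain ⟨α₀, hα₃α₀, he2⟩ :=
    eqStab t₁ ι₁ ht₁_comp heq₁ (hft₁ α₁) (G'.comp H) (t₁ α₁ α₃ hα₁α₃) hcomp2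
  set W := (t₁ α₃ α₀ hα₃α₀).comp G' with hWdef
  have hWH : W.comp H = t₁ α₁ α₀ (le_trans hα₁α₃ hα₃α₀) := by
    rw [hWdef, AlgHom.comp_assoc, he2, ht₁_comp]
  have hWι : (ι₁ α₀).comp W = ι₂ γ₃ := by rw [hWdef, ← AlgHom.comp_assoc, hι₁, hG']
  refine ⟨α₀, fun α hα => ?_⟩
  refine ⟨(t₁ α₀ α hα).comp (W.comp (H.comp g₁)), ⟨?_, ?_⟩, ?_⟩
  · -- formal smoothness
    have fs1 : @Algebra.FormallySmooth (A₂ β) (A₂ γ₃) _ _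
        (H.toRingHom.comp g₁.toRingHom).toAlgebra := by
      have hrw : (t₂ β γ₃ (le_trans hβγ₂ hγ₂γ₃)).toRingHom
          = H.toRingHom.comp g₁.toRingHom := by
        rw [← hHg]; rfl
      exact hrw ▸ (hsm₂ β γ₃ _).1
    have fs2 : @Algebra.FormallySmooth (A₁ α₁) (A₁ α₀) _ _
        (W.toRingHom.comp H.toRingHom).toAlgebra := by
      have hrw : (t₁ α₁ α₀ (le_trans hα₁α₃ hα₃α₀)).toRingHom
          = W.toRingHom.comp H.toRingHom := by
        rw [← hWH]; rfl
      exact hrw ▸ (hsm₁ α₁ α₀ _).1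
    have fs3 := sandwichFS g₁.toRingHom H.toRingHom W.toRingHom fs1 fs2
    have fs4 : @Algebra.FormallySmooth (A₂ β) (A₁ α₀) _ _
        ((RingHom.id (A₁ α₀)).comp
          ((W.toRingHom.comp H.toRingHom).comp g₁.toRingHom)).toAlgebra := by
      rw [RingHom.id_comp]; exact fs3
    have fs5 : @Algebra.FormallySmooth (A₁ α₀) (A₁ α) _ _
        ((t₁ α₀ α hα).toRingHom.comp (RingHom.id (A₁ α₀))).toAlgebra := by
      rw [RingHom.comp_id]; exact (hsm₁ α₀ α hα).1
    have fs6 := sandwichFS ((W.toRingHom.comp H.toRingHom).comp g₁.toRingHom)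
      (RingHom.id (A₁ α₀)) (t₁ α₀ α hα).toRingHom fs4 fs5
    have hrw : ((t₁ α₀ α hα).toRingHom.comp (RingHom.id (A₁ α₀))).comp
        ((W.toRingHom.comp H.toRingHom).comp g₁.toRingHom)
        = ((t₁ α₀ α hα).comp (W.comp (H.comp g₁))).toRingHom :=
      RingHom.ext fun _ => rfl
    exact hrw ▸ fs6
  · exact fpHelper (hft₂ β) (hft₁ α) _
  · refine AlgHom.ext fun x => ?_
    show ι₁ α (t₁ α₀ α hα (W (H (g₁ x)))) = ι₂ β x
    have e1 := DFunLike.congr_fun (hι₁ α₀ α hα) (W (H (g₁ x)))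
    have e2 := DFunLike.congr_fun hWι (H (g₁ x))
    have e3 := DFunLike.congr_fun hH (g₁ x)
    have e4 := DFunLike.congr_fun hg₁ x
    simp only [AlgHom.comp_apply] at e1 e2 e3 e4
    rw [e1, e2, e3, e4]
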